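/- With G = D_p^{n−1} × C_p and H = ⟨r_1 r_n, …, r_{n−1} r_n⟩ as above (p an odd prime), the intersection of all subgroups B with H < B ≤ G strictly contains H. -/

import Mathlib

open DihedralGroup Multiplicative

theorem DG.r_inv {n : ℕ} (i : ZMod n) : (DihedralGroup.r i)⁻¹ = DihedralGroup.r (-i) := rfl
theorem DG.sr_inv {n : ℕ} (i : ZMod n) : (DihedralGroup.sr i)⁻¹ = DihedralGroup.sr i := rfl

theorem memH (p : ℕ) [NeZero p] (m : ℕ)
    (x : (Fin m → DihedralGroup p) × Multiplicative (ZMod p)) :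
    x ∈ Subgroup.closure (Set.range fun i : Fin m =>
      ((Pi.mulSingle i (DihedralGroup.r 1) : Fin m → DihedralGroup p),
        Multiplicative.ofAdd (1 : ZMod p))) ↔
    ∃ a : Fin m → ZMod p, x.1 = (fun i => DihedralGroup.r (a i)) ∧
      x.2 = Multiplicative.ofAdd (∑ i, a i) := by
  classical
  set C := Subgroup.closure (Set.range fun i : Fin m =>
      ((Pi.mulSingle i (DihedralGroup.r 1) : Fin m → DihedralGroup p),
        Multiplicative.ofAdd (1 : ZMod p))) with hC
  constructor
  · intro hx
    induction hx using Subgroup.closure_induction with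
    | mem y hy =>
      obtain ⟨i, rfl⟩ := hy
      refine ⟨Pi.single i 1, ?_, ?_⟩
      · funext j
        by_cases h : j = i
        · subst h; simp
        · simp [Pi.mulSingle_apply, Pi.single_apply, h]
      · simp
    | one => exact ⟨0, by funext j; simp, by simp⟩
    | mul y z hy hz ihy ihz =>
      obtain ⟨a, ha1, ha2⟩ := ihy
      obtain ⟨b, hb1, hb2⟩ := ihz
      refine ⟨a + b, ?_, ?_⟩
      · funext j; simp [Prod.fst_mul, ha1, hb1]
      · rw [Prod.snd_mul, ha2, hb2, ← ofAdd_add, ← Finset.sum_add_distrib]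
        rfl
    | inv y hy ihy =>
      obtain ⟨a, ha1, ha2⟩ := ihy
      refine ⟨-a, ?_, ?_⟩
      · funext j
        have : y.1 j = DihedralGroup.r (a j) := by rw [ha1]
        rw [Prod.fst_inv, Pi.inv_apply, this, DG.r_inv]
        rfl
      · rw [Prod.snd_inv, ha2, ← ofAdd_neg]
        congr 1
        simp
  · rintro ⟨a, h1, h2⟩
    have step1 : ∀ (j : Fin m) (c : ZMod p),
        (((fun i => if i = j then DihedralGroup.r c else 1) : Fin m → DihedralGroup p),
          Multiplicative.ofAdd c) ∈ C := by
      intro j c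
      have : (((fun i => if i = j then DihedralGroup.r c else 1) : Fin m → DihedralGroup p),
          Multiplicative.ofAdd c)
          = ((Pi.mulSingle j (DihedralGroup.r 1) : Fin m → DihedralGroup p),
            Multiplicative.ofAdd (1 : ZMod p)) ^ c.val := by
        refine Prod.ext ?_ ?_
        · rw [Prod.pow_fst]
          funext i
          simp only [Pi.pow_apply, Pi.mulSingle_apply]
          by_cases h : i = j
          · simp [h, r_one_pow, ZMod.natCast_val, ZMod.cast_id]
          · simp [h]
        · rw [Prod.pow_snd, ← ofAdd_nsmul, nsmul_eq_mul, mul_one, ZMod.natCast_val, ZMod.cast_id]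
      rw [this]
      exact pow_mem (Subgroup.subset_closure (Set.mem_range_self j)) _
    have main : ∀ s : Finset (Fin m), ∀ a : Fin m → ZMod p,
        (((fun i => if i ∈ s then DihedralGroup.r (a i) else 1) : Fin m → DihedralGroup p),
          Multiplicative.ofAdd (∑ i ∈ s, a i)) ∈ C := by
      intro s
      induction s using Finset.induction_on with
      | empty => intro a; simp; exact one_mem C
      | @insert j s hj ih =>
        intro a
        have hmul := mul_mem (step1 j (a j)) (ih a)
        have heq : (((fun i => if i ∈ insert j s then DihedralGroup.r (a i) else 1) :
              Fin m → DihedralGroup p),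
            Multiplicative.ofAdd (∑ i ∈ insert j s, a i))
            = (((fun i => if i = j then DihedralGroup.r (a j) else 1) : Fin m → DihedralGroup p),
                Multiplicative.ofAdd (a j)) *
              (((fun i => if i ∈ s then DihedralGroup.r (a i) else 1) : Fin m → DihedralGroup p),
                Multiplicative.ofAdd (∑ i ∈ s, a i)) := by
          refine Prod.ext ?_ ?_
          · funext i
            rw [Prod.fst_mul, Pi.mul_apply]
            by_cases h : i = j
            · subst h
              simp [hj]
            · simp [Finset.mem_insert, h]
          · rw [Prod.snd_mul, ← ofAdd_add, Finset.sum_insert hj]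
        rw [heq]
        exact hmul
    have := main Finset.univ a
    simp only [Finset.mem_univ, if_true] at this
    rw [hC]
    have hx : x = (((fun i => DihedralGroup.r (a i)) : Fin m → DihedralGroup p),
        Multiplicative.ofAdd (∑ i, a i)) := Prod.ext h1 h2
    rw [hx]
    exact this

theorem inf_of_subgroups_strictly_above_H (p : ℕ) (hp : p.Prime) (hodd : Odd p) (m : ℕ)
    (H : Subgroup ((Fin m → DihedralGroup p) × Multiplicative (ZMod p)))
    (hH : H = Subgroup.closure (Set.range fun i : Fin m =>
      ((Pi.mulSingle i (DihedralGroup.r 1) : Fin m → DihedralGroup p),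
        Multiplicative.ofAdd (1 : ZMod p)))) :
    H < sInf {B : Subgroup ((Fin m → DihedralGroup p) × Multiplicative (ZMod p)) | H < B} := by
  haveI : Fact p.Prime := ⟨hp⟩
  rw [SetLike.lt_iff_le_and_exists]
  constructor
  · exact le_sInf fun B hB => hB.le
  · refine ⟨(1, Multiplicative.ofAdd (1 : ZMod p)), ?_, ?_⟩
    · rw [Subgroup.mem_sInf]
      intro B hB
      obtain ⟨x, hxB, hxH⟩ := SetLike.exists_of_lt (show H < B from hB)
      have key : ∃ c : ZMod p, c ≠ 0 ∧
          ((1, Multiplicative.ofAdd c) :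
            (Fin m → DihedralGroup p) × Multiplicative (ZMod p)) ∈ B := by
        by_cases hall : ∀ i, ∃ a, x.1 i = DihedralGroup.r a
        · choose a ha using hall
          have hh : (((fun i => DihedralGroup.r (a i)) : Fin m → DihedralGroup p),
              Multiplicative.ofAdd (∑ i, a i)) ∈ H := by
            rw [hH]; exact (memH p m _).2 ⟨a, rfl, rfl⟩
          refine ⟨toAdd x.2 - ∑ i, a i, ?_, ?_⟩
          · intro h0
            apply hxH
            rw [hH]
            refine (memH p m _).2 ⟨a, funext ha, ?_⟩
            rw [← sub_eq_zero.mp h0, ofAdd_toAdd]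
          · have heq : ((1, Multiplicative.ofAdd (toAdd x.2 - ∑ i, a i)) :
                (Fin m → DihedralGroup p) × Multiplicative (ZMod p))
                = x * (((fun i => DihedralGroup.r (a i)) : Fin m → DihedralGroup p),
                  Multiplicative.ofAdd (∑ i, a i))⁻¹ := by
              refine Prod.ext ?_ ?_
              · rw [Prod.fst_mul, Prod.fst_inv]
                rw [show x.1 = (fun i => DihedralGroup.r (a i)) from funext ha]
                simp
              · rw [Prod.snd_mul, Prod.snd_inv, ofAdd_sub, div_eq_mul_inv, ofAdd_toAdd]
            rw [heq]
            exact mul_mem hxB (inv_mem ((show H < B from hB).le hh))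
        · push_neg at hall
          obtain ⟨i, hi⟩ := hall
          obtain ⟨b, hb⟩ : ∃ b, x.1 i = DihedralGroup.sr b := by
            cases h : x.1 i with
            | r b => exact absurd h (hi b)
            | sr b => exact ⟨b, rfl⟩
          have hg : ((Pi.mulSingle i (DihedralGroup.r 1) : Fin m → DihedralGroup p),
              Multiplicative.ofAdd (1 : ZMod p)) ∈ B := by
            apply (show H < B from hB).le
            rw [hH]
            exact Subgroup.subset_closure ⟨i, rfl⟩
          refine ⟨2, ?_, ?_⟩
          · intro h2
            have hdvd : p ∣ 2 := by
              have h2' : ((2 : ℕ) : ZMod p) = 0 := by exact_mod_cast h2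
              exact (ZMod.natCast_eq_zero_iff 2 p).mp h2'
            have hp2 := (Nat.prime_dvd_prime_iff_eq hp Nat.prime_two).mp hdvd
            rw [hp2] at hodd
            exact (by decide : ¬ Odd 2) hodd
          · have hz : ((1, Multiplicative.ofAdd (2 : ZMod p)) :
                (Fin m → DihedralGroup p) × Multiplicative (ZMod p))
                = x * ((Pi.mulSingle i (DihedralGroup.r 1), Multiplicative.ofAdd (1 : ZMod p)))
                  * x⁻¹ * ((Pi.mulSingle i (DihedralGroup.r 1),
                    Multiplicative.ofAdd (1 : ZMod p))) := by
              refine Prod.ext ?_ ?_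
              · funext j
                simp only [Prod.fst_mul, Prod.fst_inv, Pi.mul_apply, Pi.inv_apply, Pi.one_apply,
                  Pi.mulSingle_apply]
                by_cases hji : j = i
                · subst hji
                  rw [if_pos rfl, hb, DG.sr_inv, sr_mul_r, sr_mul_sr, r_mul_r, one_def]
                  congr 1
                  ring
                · rw [if_neg hji]
                  simp
              · simp only [Prod.snd_mul, Prod.snd_inv]
                rw [mul_comm x.2 (Multiplicative.ofAdd (1 : ZMod p)),
                  mul_assoc (Multiplicative.ofAdd (1 : ZMod p)) x.2, mul_inv_cancel, mul_one,
                  ← ofAdd_add, one_add_one_eq_two]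
            rw [hz]
            exact mul_mem (mul_mem (mul_mem hxB hg) (inv_mem hxB)) hg
      obtain ⟨c, hc, hcB⟩ := key
      have hpow : ((1, Multiplicative.ofAdd (1 : ZMod p)) :
          (Fin m → DihedralGroup p) × Multiplicative (ZMod p))
          = ((1, Multiplicative.ofAdd c) :
            (Fin m → DihedralGroup p) × Multiplicative (ZMod p)) ^ (c⁻¹).val := by
        rw [Prod.pow_mk, one_pow, ← ofAdd_nsmul, nsmul_eq_mul, ZMod.natCast_val, ZMod.cast_id,
          inv_mul_cancel₀ hc]
      rw [hpow]
      exact pow_mem hcB _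
    · intro hmem
      rw [hH] at hmem
      obtain ⟨a, h1, h2⟩ := (memH p m _).1 hmem
      have ha : ∀ j, a j = 0 := by
        intro j
        have hj := congrFun h1 j
        simp only [Pi.one_apply] at hj
        rw [one_def] at hj
        exact (DihedralGroup.r.injEq _ _).mp hj.symm
      have : (1 : ZMod p) = ∑ i, a i := ofAdd.injective h2
      rw [Finset.sum_congr rfl (fun j _ => ha j), Finset.sum_const_zero] at this
      exact one_ne_zero this
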